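/- arXiv:2412.17930 — 2 statements merged into one kernel-verified Lean document; each statement's English description precedes it below -/
import Mathlib

section
/- Let f be an infinite sequence of unfolding instructions, and define the infinite instruction sequence g by: g = 1·(-x) if f = 1·1·x; g = (-1)·(-x) if f = 1·(-1)·x; g = (-1)·x if f = (-1)·1·x; g = 1·x if f = (-1)·(-1)·x. Then for all n ≥ 1, the ending position E_f[n] of the n-th maximal run of P_f satisfies E_f[n] = 2n if P_g[n] = 1, and E_f[n] = 2n - 1 if P_g[n] = -1. -/
/-- Paperfolding word; instructions are given with the most recent (last) instruction first. -/
def foldAux : List ℤ → List ℤ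
  | [] => []
  | a :: f => foldAux f ++ a :: (foldAux f).reverse.map (fun x => -x)

/-- `paper f` is the finite paperfolding word `P_f` for instructions `f = [f_0, f_1, …]`,
satisfying `P_ε = ε` and `P_{f·a} = P_f · a · (-P_f^R)`. -/
def paper (f : List ℤ) : List ℤ := foldAux f.reverse

/-- The sequence of lengths of the maximal runs (maximal blocks of equal symbols) of `w`. -/
def runLengths (w : List ℤ) : List ℕ := (w.splitBy (fun a b => a == b)).map List.length

/-- `p` (indexed from 1) is the infinite paperfolding sequence with instructions `f`,
i.e. every finite paperfolding word of a prefix of `f` is a prefix of `p`. -/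
def IsLimit (f : ℕ → ℤ) (p : ℕ → ℤ) : Prop :=
  ∀ m k, k < (paper ((List.range m).map f)).length →
    p (k + 1) = (paper ((List.range m).map f)).getD k 0

/-- `E` enumerates, in increasing order (`E 1 < E 2 < ⋯`, with the convention `E 0 = 0`),
the ending positions of the maximal runs of the sequence `p` (indexed from 1):
position `m ≥ 1` ends a run iff `p m ≠ p (m+1)`. -/
def IsRunEnds (p : ℕ → ℤ) (E : ℕ → ℕ) : Prop :=
  E 0 = 0 ∧ StrictMono E ∧ ∀ m, 1 ≤ m → ((∃ n, 1 ≤ n ∧ E n = m) ↔ p m ≠ p (m + 1))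

def ilv (c : ℤ) : List ℤ → List ℤ
  | [] => [c]
  | x :: t => c :: x :: ilv (-c) t

def altS (s : ℤ) : List ℤ → List ℤ
  | [] => []
  | a :: t => s * a :: altS (-s) t

lemma ilv_length (u : List ℤ) : ∀ c, (ilv c u).length = 2 * u.length + 1 := by
  induction u with
  | nil => intro c; simp [ilv]
  | cons x t ih => intro c; simp [ilv, ih]; omega

lemma ilv_append (u : List ℤ) : ∀ (c b : ℤ) (w : List ℤ),
    ilv c (u ++ b :: w) = ilv c u ++ b :: ilv (-((-1) ^ u.length * c)) w := by
  induction u with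
  | nil => intro c b w; simp [ilv]
  | cons x t ih =>
      intro c b w
      show c :: x :: ilv (-c) (t ++ b :: w) = _
      rw [ih]
      have hs : -((-1 : ℤ) ^ (x :: t).length * c) = -((-1) ^ t.length * (-c)) := by
        rw [List.length_cons, pow_succ]; ring
      rw [show ilv c (x :: t) = c :: x :: ilv (-c) t from rfl, hs]
      simp

lemma ilv_reverse_neg (u : List ℤ) : ∀ c,
    ((ilv c u).reverse.map (fun x => -x)) =
      ilv ((-1) ^ (u.length + 1) * c) (u.reverse.map (fun x => -x)) := by
  induction u with
  | nil => intro c; simp [ilv]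
  | cons x t ih =>
      intro c
      simp only [ilv, List.reverse_cons, List.map_append, List.map_cons, List.map_nil,
        List.length_cons]
      rw [ih]
      rw [show (t.reverse.map fun x => -x) ++ [-x]
          = (t.reverse.map fun x => -x) ++ (-x) :: ([] : List ℤ) from rfl]
      rw [ilv_append]
      have h1 : ((-1 : ℤ) ^ (t.length + 1) * (-c)) = ((-1) ^ (t.length + 1 + 1) * c) := by
        rw [pow_succ _ (t.length+1)]; ring
      have h2 : ∀ d : ℤ, ilv d ([] : List ℤ) = [d] := fun d => rfl
      rw [h1, h2]
      have h3 : -((-1 : ℤ) ^ (t.reverse.map fun x => -x).length *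
          ((-1) ^ (t.length + 1 + 1) * c)) = -c := by
        simp only [List.length_map, List.length_reverse]
        rw [pow_succ, pow_succ]
        ring_nf
        rw [mul_comm t.length 2, pow_mul]; simp
      rw [h3]
      simp

lemma foldAux_concat (l : List ℤ) : ∀ a, foldAux (l ++ [a]) = ilv a (foldAux l) := by
  induction l with
  | nil => intro a; simp [foldAux, ilv]
  | cons b t ih =>
      intro a
      show foldAux (b :: (t ++ [a])) = _
      rw [foldAux, ih, ilv_reverse_neg, foldAux, ilv_append]
      congr 2
      ring_nf

lemma getD_map_neg (l : List ℤ) : ∀ k, (l.map (fun x => -x)).getD k 0 = -(l.getD k 0) := by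
  induction l with
  | nil => intro k; simp
  | cons a t ih => intro k; cases k with
      | zero => simp
      | succ k => simpa using ih k

lemma ilv_getD_even (u : List ℤ) : ∀ c k, k ≤ u.length →
    (ilv c u).getD (2 * k) 0 = (-1) ^ k * c := by
  induction u with
  | nil =>
      intro c k hk
      have : k = 0 := by simpa using hk
      subst this
      simp [ilv]
  | cons x t ih =>
      intro c k hk
      cases k with
      | zero => simp [ilv]
      | succ k =>
          have : 2 * (k + 1) = (2 * k) + 1 + 1 := by ring
          rw [this]
          show (ilv (-c) t).getD (2 * k) 0 = _
          rw [ih (-c) k (by simpa using hk), pow_succ]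
          ring

lemma ilv_getD_odd (u : List ℤ) : ∀ c k, (ilv c u).getD (2 * k + 1) 0 = u.getD k 0 := by
  induction u with
  | nil => intro c k; simp [ilv]
  | cons x t ih =>
      intro c k
      cases k with
      | zero => simp [ilv]
      | succ k =>
          have : 2 * (k + 1) + 1 = (2 * k + 1) + 1 + 1 := by ring
          rw [this]
          show (ilv (-c) t).getD (2 * k + 1) 0 = _
          simpa using ih (-c) k

lemma altS_length (u : List ℤ) : ∀ s, (altS s u).length = u.length := by
  induction u with
  | nil => intro s; simp [altS]
  | cons a t ih => intro s; simp [altS, ih]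

lemma altS_append (u : List ℤ) : ∀ (s : ℤ) (v : List ℤ),
    altS s (u ++ v) = altS s u ++ altS ((-1) ^ u.length * s) v := by
  induction u with
  | nil => intro s v; simp [altS]
  | cons a t ih =>
      intro s v
      show s * a :: altS (-s) (t ++ v) = _
      rw [ih]
      have : (-1 : ℤ) ^ t.length * (-s) = (-1) ^ (a :: t).length * s := by
        rw [List.length_cons, pow_succ]; ring
      rw [this]
      simp [altS]

lemma altS_map_neg (u : List ℤ) : ∀ s,
    altS s (u.map (fun x => -x)) = (altS s u).map (fun x => -x) := by
  induction u with
  | nil => intro s; simp [altS]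
  | cons a t ih => intro s; simp [altS, ih]

lemma altS_reverse (u : List ℤ) : ∀ s,
    (altS s u).reverse = altS ((-1) ^ (u.length + 1) * s) u.reverse := by
  induction u with
  | nil => intro s; simp [altS]
  | cons a t ih =>
      intro s
      rw [show altS s (a :: t) = s * a :: altS (-s) t from rfl, List.reverse_cons, ih,
        List.reverse_cons, altS_append]
      have h1 : (-1 : ℤ) ^ (t.length + 1) * (-s) = (-1) ^ ((a :: t).length + 1) * s := by
        rw [List.length_cons, pow_succ]; ring
      have h2 : altS ((-1 : ℤ) ^ t.reverse.length * ((-1) ^ ((a :: t).length + 1) * s)) [a]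
          = [s * a] := by
        show [_] = _
        congr 1
        simp only [List.length_reverse, List.length_cons]
        rw [pow_succ, pow_succ]
        ring_nf
        try (rw [mul_comm t.length 2, pow_mul]; simp)
      rw [h1, h2]

lemma altS_getD (u : List ℤ) : ∀ s k, (altS s u).getD k 0 = (-1) ^ k * s * u.getD k 0 := by
  induction u with
  | nil => intro s k; simp [altS]
  | cons a t ih =>
      intro s k
      cases k with
      | zero => simp [altS]
      | succ k =>
          show (altS (-s) t).getD k 0 = _
          rw [ih (-s) k, pow_succ]
          simp only [List.getD_cons_succ]
          ring

lemma foldAux_length (l : List ℤ) : (foldAux l).length = 2 ^ l.length - 1 := by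
  induction l with
  | nil => simp [foldAux]
  | cons a t ih =>
      have h : 1 ≤ 2 ^ t.length := Nat.one_le_two_pow
      simp [foldAux, ih, pow_succ]
      omega

lemma foldAux_map_neg (l : List ℤ) :
    foldAux (l.map (fun x => -x)) = (foldAux l).map (fun x => -x) := by
  induction l with
  | nil => simp [foldAux]
  | cons a t ih =>
      show foldAux ((-a) :: t.map (fun x => -x)) = _
      rw [foldAux, ih, foldAux]
      simp only [List.map_append, List.map_cons, List.map_reverse, List.map_map]
      try congr 2
      try simp [Function.comp]

lemma foldAux_neg_tail (l : List ℤ) : ∀ a,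
    foldAux (l.map (fun x => -x) ++ [a]) = altS 1 (foldAux (l ++ [a])) := by
  induction l with
  | nil => intro a; simp [foldAux, altS]
  | cons b t ih =>
      intro a
      show foldAux ((-b) :: (t.map (fun x => -x) ++ [a])) = _
      rw [foldAux, ih]
      have hlen : (foldAux (t ++ [a])).length = 2 ^ (t.length + 1) - 1 := by
        rw [foldAux_length]; simp
      show _ = altS 1 (foldAux (b :: (t ++ [a])))
      rw [foldAux, altS_append]
      rw [hlen]
      have hodd : Odd (2 ^ (t.length + 1) - 1) := by
        have : 1 ≤ 2 ^ (t.length + 1) := Nat.one_le_two_pow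
        have h2 : 2 ∣ 2 ^ (t.length + 1) := dvd_pow_self 2 (Nat.succ_ne_zero _)
        rcases h2 with ⟨c, hc⟩
        exact ⟨c - 1, by omega⟩
      have hsgn : ((-1 : ℤ) ^ (2 ^ (t.length + 1) - 1) * 1) = -1 := by
        rw [hodd.neg_one_pow]; ring
      rw [hsgn]
      show _ = _ ++ ((-1) * b) :: altS (-(-1)) ((foldAux (t ++ [a])).reverse.map (fun x => -x))
      rw [show (-(-1) : ℤ) = 1 from rfl]
      have heven : Even (2 ^ (t.length + 1) - 1 + 1) := by
        rcases hodd with ⟨c, hc⟩; exact ⟨c + 1, by omega⟩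
      have hrev : (altS 1 (foldAux (t ++ [a]))).reverse
          = altS 1 (foldAux (t ++ [a])).reverse := by
        rw [altS_reverse, hlen]
        simp [heven.neg_one_pow]
      rw [altS_map_neg, hrev]
      norm_num

lemma getD_map_mul (c : ℤ) (l : List ℤ) : ∀ k,
    (l.map (fun x => c * x)).getD k 0 = c * l.getD k 0 := by
  induction l with
  | nil => intro k; simp
  | cons a t ih => intro k; cases k with
      | zero => simp
      | succ k => simpa using ih k

lemma paper_cons (a : ℤ) (l : List ℤ) : paper (a :: l) = ilv a (paper l) := by
  unfold paper
  rw [List.reverse_cons, foldAux_concat]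

lemma paper_length (l : List ℤ) : (paper l).length = 2 ^ l.length - 1 := by
  unfold paper; rw [foldAux_length]; simp

lemma paper_neg_head (a : ℤ) (l : List ℤ) :
    paper (a :: l.map (fun x => -x)) = altS 1 (paper (a :: l)) := by
  unfold paper
  rw [List.reverse_cons, List.reverse_cons, ← List.map_reverse, foldAux_neg_tail]

lemma paper_neg (l : List ℤ) : paper (l.map (fun x => -x)) = (paper l).map (fun x => -x) := by
  unfold paper
  rw [← List.map_reverse, foldAux_map_neg]

lemma paper_scale (c : ℤ) (hc : c = 1 ∨ c = -1) (a : ℤ) (l : List ℤ) :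
    paper ((c * a) :: l.map (fun x => -(c * x)))
      = (altS 1 (paper (a :: l))).map (fun x => c * x) := by
  rcases hc with rfl | rfl
  · simp only [one_mul]
    rw [paper_neg_head]
    simp
  · simp only [neg_one_mul, neg_neg]
    rw [show (List.map (fun x : ℤ => x) l) = l from List.map_id' l]
    have h1 : (-a) :: l = ((a :: l.map (fun x => -x)).map (fun x => -x)) := by
      simp
    rw [h1, paper_neg, paper_neg_head]
    try simp [neg_one_mul]

lemma range_map_succ_shift (h : ℕ → ℤ) (m : ℕ) :
    (List.range (m + 1)).map h = h 0 :: (List.range m).map (fun i => h (i + 1)) := by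
  rw [List.range_succ_eq_map, List.map_cons, List.map_map]
  rfl

lemma foldAux_pm (l : List ℤ) (h : ∀ x ∈ l, x = -1 ∨ x = 1) :
    ∀ x ∈ foldAux l, x = -1 ∨ x = 1 := by
  induction l with
  | nil => intro x hx; simp [foldAux] at hx
  | cons a t ih =>
      intro x hx
      rw [foldAux] at hx
      simp only [List.mem_append, List.mem_cons, List.mem_map, List.mem_reverse] at hx
      rcases hx with hx | hx | ⟨y, hy, rfl⟩
      · exact ih (fun z hz => h z (by simp [hz])) x hx
      · exact hx ▸ h a (by simp)
      · rcases ih (fun z hz => h z (by simp [hz])) y hy with h' | h' <;> simp [h']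

lemma paper_pm (l : List ℤ) (h : ∀ x ∈ l, x = -1 ∨ x = 1) :
    ∀ x ∈ paper l, x = -1 ∨ x = 1 :=
  foldAux_pm l.reverse (fun x hx => h x (List.mem_reverse.mp hx))

lemma limit_odd (f p : ℕ → ℤ) (hp : IsLimit f p) :
    ∀ k, p (2 * k + 1) = (-1) ^ k * f 0 := by
  intro k
  have hk2 : k < 2 ^ k := Nat.lt_two_pow_self (n := k)
  have hlen : 2 * k < (paper ((List.range (k + 1)).map f)).length := by
    rw [paper_length, List.length_map, List.length_range, pow_succ]
    omega
  have h := hp (k + 1) (2 * k) hlen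
  rw [range_map_succ_shift, paper_cons] at h
  rw [h, ilv_getD_even]
  rw [paper_length, List.length_map, List.length_range]
  omega

lemma limit_even (f p : ℕ → ℤ) (hp : IsLimit f p) :
    ∀ j m, j < 2 ^ m - 1 →
      p (2 * j + 2) = (paper ((List.range m).map (fun i => f (i + 1)))).getD j 0 := by
  intro j m hj
  have h1 : 1 ≤ 2 ^ m := Nat.one_le_two_pow
  have hlen : 2 * j + 1 < (paper ((List.range (m + 1)).map f)).length := by
    rw [paper_length, List.length_map, List.length_range, pow_succ]
    omega
  have h := hp (m + 1) (2 * j + 1) hlen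
  rw [range_map_succ_shift, paper_cons, ilv_getD_odd] at h
  exact h

lemma limit_pm (g q : ℕ → ℤ) (hq : IsLimit g q) (hg : ∀ n, g n = -1 ∨ g n = 1) :
    ∀ n, q (n + 1) = -1 ∨ q (n + 1) = 1 := by
  intro n
  have hn2 : n < 2 ^ n := Nat.lt_two_pow_self (n := n)
  have hmono : (2:ℕ) ^ n ≤ 2 ^ (n + 1) := Nat.pow_le_pow_right (by norm_num) (by omega)
  have hlen : n < (paper ((List.range (n + 1)).map g)).length := by
    rw [paper_length, List.length_map, List.length_range]
    omega
  have h := hq (n + 1) n hlen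
  rw [List.getD_eq_getElem _ _ hlen] at h
  have hmem := List.getElem_mem hlen
  have := paper_pm ((List.range (n + 1)).map g)
    (by intro x hx
        simp only [List.mem_map] at hx
        obtain ⟨i, _, rfl⟩ := hx
        exact hg i) _ hmem
  rw [h]; exact this

lemma limit_q (f g q : ℕ → ℤ) (hq : IsLimit g q) (hf0 : f 0 = 1 ∨ f 0 = -1)
    (hG0 : g 0 = f 0 * f 1) (hGS : ∀ i, g (i + 1) = -(f 0 * f (i + 2))) :
    ∀ n, q (n + 1) = (-1) ^ n * f 0 *
      (paper (f 1 :: (List.range (n + 1)).map (fun i => f (i + 2)))).getD n 0 := by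
  intro n
  have hn2 : n < 2 ^ n := Nat.lt_two_pow_self (n := n)
  have hp4 : (2:ℕ) ^ (n + 2) = 4 * 2 ^ n := by rw [pow_succ, pow_succ]; ring
  have hlen : n < (paper ((List.range (n + 2)).map g)).length := by
    rw [paper_length, List.length_map, List.length_range]
    omega
  have h := hq (n + 2) n hlen
  have hlist : (List.range (n + 2)).map g
      = (f 0 * f 1) :: ((List.range (n + 1)).map (fun i => f (i + 2))).map
          (fun x => -(f 0 * x)) := by
    rw [range_map_succ_shift, List.map_map, hG0]
    congr 1
    apply List.map_congr_left
    intro i _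
    exact hGS i
  rw [hlist, paper_scale (f 0) hf0, getD_map_mul, altS_getD] at h
  rw [h]
  ring

def sFun (q : ℕ → ℤ) (n : ℕ) : ℕ := if q n = 1 then 2 * n else 2 * n - 1

theorem runEnds_via_assoc (f g p q : ℕ → ℤ) (E : ℕ → ℕ)
    (hf : ∀ n, f n = -1 ∨ f n = 1) (hg : ∀ n, g n = -1 ∨ g n = 1)
    (hg1 : f 0 = 1 → f 1 = 1 → g 0 = 1 ∧ ∀ n, 1 ≤ n → g n = -f (n + 1))
    (hg2 : f 0 = 1 → f 1 = -1 → g 0 = -1 ∧ ∀ n, 1 ≤ n → g n = -f (n + 1))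
    (hg3 : f 0 = -1 → f 1 = 1 → g 0 = -1 ∧ ∀ n, 1 ≤ n → g n = f (n + 1))
    (hg4 : f 0 = -1 → f 1 = -1 → g 0 = 1 ∧ ∀ n, 1 ≤ n → g n = f (n + 1))
    (hp : IsLimit f p) (hq : IsLimit g q) (hE : IsRunEnds p E) :
    ∀ n, 1 ≤ n → (q n = 1 → E n = 2 * n) ∧ (q n = -1 → E n = 2 * n - 1) := by
  have hG0 : g 0 = f 0 * f 1 := by
    rcases hf 0 with h0 | h0 <;> rcases hf 1 with h1 | h1
    · rw [(hg4 h0 h1).1, h0, h1]; norm_num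
    · rw [(hg3 h0 h1).1, h0, h1]; norm_num
    · rw [(hg2 h0 h1).1, h0, h1]; norm_num
    · rw [(hg1 h0 h1).1, h0, h1]; norm_num
  have hGS : ∀ i, g (i + 1) = -(f 0 * f (i + 2)) := by
    intro i
    rcases hf 0 with h0 | h0 <;> rcases hf 1 with h1 | h1
    · rw [(hg4 h0 h1).2 (i + 1) (by omega), h0]; ring
    · rw [(hg3 h0 h1).2 (i + 1) (by omega), h0]; ring
    · rw [(hg2 h0 h1).2 (i + 1) (by omega), h0]; ring
    · rw [(hg1 h0 h1).2 (i + 1) (by omega), h0]; ring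
  obtain ⟨hE0, hEmono, hEiff⟩ := hE
  have hf0 : f 0 = 1 ∨ f 0 = -1 := (hf 0).symm
  have hP1 : ∀ k, p (2 * k + 1) = (-1) ^ k * f 0 := limit_odd f p hp
  have hPE := limit_even f p hp
  have hQl := limit_q f g q hq hf0 hG0 hGS
  have hQ : ∀ k, q (k + 1) = (-1) ^ k * f 0 * p (2 * k + 2) := by
    intro k
    have hk2 : k < 2 ^ k := Nat.lt_two_pow_self (n := k)
    have hp4 : (2 : ℕ) ^ (k + 2) = 4 * 2 ^ k := by rw [pow_succ, pow_succ]; ring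
    have he := hPE k (k + 2) (by omega)
    have hl2 : (List.range (k + 2)).map (fun i => f (i + 1))
        = f 1 :: (List.range (k + 1)).map (fun i => f (i + 2)) := by
      rw [range_map_succ_shift]
    rw [hl2] at he
    rw [hQl k, ← he]
  have hQpm : ∀ k, q (k + 1) = -1 ∨ q (k + 1) = 1 := limit_pm g q hq hg
  have hPB : ∀ k, p (2 * k + 2) = (-1) ^ k * f 0 * q (k + 1) := by
    intro k
    have hsq : ((-1 : ℤ) ^ k * f 0) * ((-1) ^ k * f 0) = 1 := by
      have h1 : ((-1 : ℤ) ^ k) * ((-1) ^ k) = 1 := by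
        rw [← pow_add]; exact Even.neg_one_pow ⟨k, rfl⟩
      rcases hf 0 with h0 | h0 <;> rw [h0] <;> nlinarith [h1]
    have hth := hQ k
    linear_combination (-((-1 : ℤ) ^ k * f 0)) * hth - p (2 * k + 2) * hsq
  have hP3 : ∀ k, p (2 * k + 3) = -((-1) ^ k * f 0) := by
    intro k
    have h := hP1 (k + 1)
    rw [show 2 * (k + 1) + 1 = 2 * k + 3 by ring] at h
    rw [h, pow_succ]
    ring
  have hcne : ∀ k, ((-1 : ℤ) ^ k * f 0) ≠ 0 := by
    intro k
    have h2 : ((-1 : ℤ) ^ k) ≠ 0 := pow_ne_zero _ (by norm_num)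
    rcases hf 0 with h0 | h0 <;> rw [h0] <;> simp [h2]
  have hsLB : ∀ k, 2 * k + 1 ≤ sFun q (k + 1) := by
    intro k; simp only [sFun]; split <;> omega
  have hsUB : ∀ k, sFun q (k + 1) ≤ 2 * k + 2 := by
    intro k; simp only [sFun]; split <;> omega
  have hsMono : ∀ j k, j < k → sFun q (j + 1) < sFun q (k + 1) := by
    intro j k h
    have h1 := hsUB j
    have h2 := hsLB k
    omega
  have hsMonoLe : ∀ j k, j ≤ k → sFun q (j + 1) ≤ sFun q (k + 1) := by
    intro j k h
    rcases eq_or_lt_of_le h with rfl | h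
    · exact le_refl _
    · exact (hsMono j k h).le
  have hEnd : ∀ k, p (sFun q (k + 1)) ≠ p (sFun q (k + 1) + 1) := by
    intro k
    rcases hQpm k with hq1 | hq1
    · have hs : sFun q (k + 1) = 2 * k + 1 := by
        simp only [sFun]; rw [if_neg (by rw [hq1]; norm_num)]; omega
      rw [hs, show 2 * k + 1 + 1 = 2 * k + 2 by omega, hP1 k, hPB k, hq1]
      intro hcon
      apply hcne k
      linarith
    · have hs : sFun q (k + 1) = 2 * k + 2 := by
        simp only [sFun]; rw [if_pos hq1]; omega
      rw [hs, show 2 * k + 2 + 1 = 2 * k + 3 by omega, hPB k, hq1, hP3 k]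
      intro hcon
      apply hcne k
      linarith
  have hMem : ∀ m, 1 ≤ m → p m ≠ p (m + 1) → ∃ k, sFun q (k + 1) = m := by
    intro m hm hne
    obtain ⟨k, hk | hk⟩ : ∃ k, m = 2 * k + 1 ∨ m = 2 * k + 2 := ⟨(m - 1) / 2, by omega⟩
    · refine ⟨k, ?_⟩
      have hq1 : q (k + 1) = -1 := by
        rcases hQpm k with h | h
        · exact h
        · exfalso; apply hne
          rw [hk, show 2 * k + 1 + 1 = 2 * k + 2 by omega, hP1 k, hPB k, h]; ring
      simp only [sFun]; rw [if_neg (by rw [hq1]; norm_num)]; omega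
    · refine ⟨k, ?_⟩
      have hq1 : q (k + 1) = 1 := by
        rcases hQpm k with h | h
        · exfalso; apply hne
          rw [hk, show 2 * k + 2 + 1 = 2 * k + 3 by omega, hPB k, hP3 k, h]; ring
        · exact h
      simp only [sFun]; rw [if_pos hq1]; omega
  have hEs : ∀ n, E (n + 1) = sFun q (n + 1) := by
    intro n
    induction n using Nat.strong_induction_on with
    | _ n ih =>
      have hle : E (n + 1) ≤ sFun q (n + 1) := by
        have h1 : 1 ≤ sFun q (n + 1) := by have := hsLB n; omega
        obtain ⟨m, hm1, hmE⟩ := (hEiff (sFun q (n + 1)) h1).mpr (hEnd n)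
        have hmn : n + 1 ≤ m := by
          by_contra hcon
          push_neg at hcon
          obtain ⟨j, rfl⟩ : ∃ j, m = j + 1 := ⟨m - 1, by omega⟩
          have hj := ih j (by omega)
          have hlt := hsMono j n (by omega)
          rw [hj] at hmE
          omega
        calc E (n + 1) ≤ E m := hEmono.monotone hmn
        _ = sFun q (n + 1) := hmE
      have hge : sFun q (n + 1) ≤ E (n + 1) := by
        have hpos : 1 ≤ E (n + 1) := by
          have := hEmono (show 0 < n + 1 from Nat.succ_pos n)
          omega
        have hrun : p (E (n + 1)) ≠ p (E (n + 1) + 1) :=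
          (hEiff (E (n + 1)) hpos).mp ⟨n + 1, by omega, rfl⟩
        obtain ⟨k, hk⟩ := hMem (E (n + 1)) hpos hrun
        have hkn : n ≤ k := by
          by_contra hcon
          push_neg at hcon
          have hjk := ih k (by omega)
          have hlt := hEmono (show k + 1 < n + 1 by omega)
          rw [hjk, hk] at hlt
          omega
        calc sFun q (n + 1) ≤ sFun q (k + 1) := hsMonoLe n k hkn
        _ = E (n + 1) := hk
      omega
  intro n hn
  obtain ⟨k, rfl⟩ : ∃ k, n = k + 1 := ⟨n - 1, by omega⟩
  constructor
  · intro hq1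
    rw [hEs k]
    simp only [sFun]
    rw [if_pos hq1]
  · intro hq1
    rw [hEs k]
    simp only [sFun]
    rw [if_neg (by rw [hq1]; norm_num)]
end

section
/- For the regular paperfolding sequence, the n-th run has length 1 if and only if n ≡ 2 or 7 (mod 8). -/
section PaperfoldingAux

def P : ℕ → ℤ
  | 0 => 1
  | (n+1) =>
    if (n+1) % 2 = 1 then (if (n+1) % 4 = 1 then 1 else -1)
    else P ((n+1)/2)
decreasing_by exact Nat.div_lt_self (Nat.succ_pos n) one_lt_two

lemma P_odd1 {n : ℕ} (h : n % 4 = 1) : P n = 1 := by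
  obtain ⟨m, rfl⟩ : ∃ m, n = m + 1 := ⟨n - 1, by omega⟩
  rw [P]
  simp [show (m+1) % 2 = 1 by omega, h]

lemma P_odd3 {n : ℕ} (h : n % 4 = 3) : P n = -1 := by
  obtain ⟨m, rfl⟩ : ∃ m, n = m + 1 := ⟨n - 1, by omega⟩
  rw [P]
  simp [show (m+1) % 2 = 1 by omega, show ¬ (m+1) % 4 = 1 by omega]

lemma P_double (s : ℕ) : P (2*s) = P s := by
  rcases s with _ | m
  · rfl
  · rw [show 2*(m+1) = (2*m+1)+1 by ring, P]
    simp [show (2*m+1+1) % 2 = 0 by omega]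
    congr 1
    omega

lemma P_pm : ∀ n : ℕ, P n = 1 ∨ P n = -1 := by
  intro n
  induction n using Nat.strong_induction_on with
  | _ n ih =>
    rcases Nat.even_or_odd n with ⟨s, hs⟩ | ⟨s, hs⟩
    · subst hs
      rw [show s + s = 2*s by ring, P_double]
      rcases Nat.eq_zero_or_pos s with rfl | hpos
      · left; rw [P]
      · exact ih s (by omega)
    · rcases Nat.even_or_odd s with ⟨t, ht⟩ | ⟨t, ht⟩
      · left; exact P_odd1 (by omega)
      · right; exact P_odd3 (by omega)


lemma P_pow (m : ℕ) : P (2^m) = 1 := by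
  induction m with
  | zero => exact P_odd1 rfl
  | succ m ih => rw [pow_succ, mul_comm, P_double]; exact ih

lemma P_anti : ∀ m t : ℕ, 1 ≤ t → t ≤ 2^m - 1 → P (2^m + t) = -P (2^m - t) := by
  intro m
  induction m with
  | zero => intro t h1 h2; omega
  | succ m ih =>
    intro t h1 h2
    rcases Nat.even_or_odd t with ⟨s, hs⟩ | ⟨s, hs⟩
    · have hs' : t = 2*s := by omega
      subst hs'
      have hm : 2^m ≥ 1 := Nat.one_le_two_pow
      have e1 : 2^(m+1) + 2*s = 2*(2^m + s) := by rw [pow_succ]; ring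
      have e2 : 2^(m+1) - 2*s = 2*(2^m - s) := by rw [pow_succ]; omega
      rw [e1, e2, P_double, P_double]
      exact ih s (by omega) (by rw [pow_succ] at h2; omega)
    · rcases Nat.eq_zero_or_pos m with rfl | hm
      · have : t = 1 := by norm_num at h2; omega
        subst this
        rw [show 2^1+1 = 3 from rfl, show 2^1-1 = 1 from rfl, P_odd3 rfl, P_odd1 rfl]
      · have h4 : 2^(m+1) % 4 = 0 := by
          have : 2^(m+1) = 4 * 2^(m-1) := by
            rw [show (4:ℕ) = 2^2 by norm_num, ← pow_add]
            congr 1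
            omega
          omega
        have hge : 2^(m+1) ≥ 2 := by have := Nat.one_le_two_pow (n := m); rw [pow_succ]; omega
        rcases Nat.even_or_odd s with ⟨u, hu⟩ | ⟨u, hu⟩
        · rw [P_odd1 (show (2^(m+1)+t) % 4 = 1 by omega),
            P_odd3 (show (2^(m+1)-t) % 4 = 3 by omega)]
          ring
        · rw [P_odd3 (show (2^(m+1)+t) % 4 = 3 by omega),
            P_odd1 (show (2^(m+1)-t) % 4 = 1 by omega)]



lemma fold_len (m : ℕ) : (foldAux (List.replicate m 1)).length = 2^m - 1 := by
  induction m with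
  | zero => rfl
  | succ m ih =>
    have h1 : 2^m ≥ 1 := Nat.one_le_two_pow
    rw [List.replicate_succ, foldAux]
    simp [ih, pow_succ]
    omega

lemma fold_getD (m : ℕ) : ∀ k, k < 2^m - 1 →
    (foldAux (List.replicate m 1)).getD k 0 = P (k+1) := by
  induction m with
  | zero => intro k hk; simp at hk
  | succ m ih =>
    intro k hk
    have h1 : 2^m ≥ 1 := Nat.one_le_two_pow
    have hlen := fold_len m
    rw [List.replicate_succ, foldAux]
    rcases lt_trichotomy k (2^m - 1) with h | h | h
    · rw [List.getD_append _ _ _ _ (by omega)]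
      exact ih k h
    · subst h
      rw [List.getD_eq_getElem?_getD, List.getElem?_append_right (by omega)]
      simp [hlen]
      rw [show 2^m - 1 + 1 = 2^m by omega]
      exact (P_pow m).symm
    · -- k = 2^m + i with i = k - 2^m, i < 2^m - 1
      have hk2 : k < 2^(m+1) - 1 := hk
      rw [pow_succ] at hk2
      set i := k - 2^m with hi
      have hik : k = 2^m + i := by omega
      have hilt : i < 2^m - 1 := by omega
      rw [List.getD_eq_getElem?_getD, List.getElem?_append_right (by omega)]
      have : k - (foldAux (List.replicate m 1)).length = i + 1 := by omega
      rw [this]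
      simp only [List.getElem?_cons_succ]
      rw [List.getElem?_map]
      rw [List.getElem?_reverse (by simp [hlen]; omega)]
      simp only [hlen]
      have hidx : 2^m - 1 - 1 - i < (foldAux (List.replicate m 1)).length := by
        simp [hlen]; omega
      rw [List.getElem?_eq_getElem hidx]
      simp only [Option.map_some, Option.getD_some]
      have := ih (2^m - 1 - 1 - i) (by omega)
      rw [List.getD_eq_getElem?_getD, List.getElem?_eq_getElem hidx] at this
      simp only [Option.getD_some] at this
      rw [this]
      have ha := P_anti m (i+1) (by omega) (by omega)
      rw [show 2^m - (i+1) = 2^m - 1 - 1 - i + 1 by omega] at ha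
      rw [show k + 1 = 2^m + (i+1) by omega, ha]


variable (j : ℕ)

lemma Pv1 : P (16*j+1) = 1 := P_odd1 (by omega)
lemma Pv2 : P (16*j+2) = 1 := by
  rw [show 16*j+2 = 2*(8*j+1) by ring, P_double]; exact P_odd1 (by omega)
lemma Pv3 : P (16*j+3) = -1 := P_odd3 (by omega)
lemma Pv4 : P (16*j+4) = 1 := by
  rw [show 16*j+4 = 2*(8*j+2) by ring, P_double, show 8*j+2 = 2*(4*j+1) by ring,
    P_double]; exact P_odd1 (by omega)
lemma Pv5 : P (16*j+5) = 1 := P_odd1 (by omega)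
lemma Pv6 : P (16*j+6) = -1 := by
  rw [show 16*j+6 = 2*(8*j+3) by ring, P_double]; exact P_odd3 (by omega)
lemma Pv7 : P (16*j+7) = -1 := P_odd3 (by omega)
lemma Pv8 : P (16*j+8) = P (2*j+1) := by
  rw [show 16*j+8 = 2*(8*j+4) by ring, P_double, show 8*j+4 = 2*(4*j+2) by ring,
    P_double, show 4*j+2 = 2*(2*j+1) by ring, P_double]
lemma Pv9 : P (16*j+9) = 1 := P_odd1 (by omega)
lemma Pv10 : P (16*j+10) = 1 := by
  rw [show 16*j+10 = 2*(8*j+5) by ring, P_double]; exact P_odd1 (by omega)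
lemma Pv11 : P (16*j+11) = -1 := P_odd3 (by omega)
lemma Pv12 : P (16*j+12) = -1 := by
  rw [show 16*j+12 = 2*(8*j+6) by ring, P_double, show 8*j+6 = 2*(4*j+3) by ring,
    P_double]; exact P_odd3 (by omega)
lemma Pv13 : P (16*j+13) = 1 := P_odd1 (by omega)
lemma Pv14 : P (16*j+14) = -1 := by
  rw [show 16*j+14 = 2*(8*j+7) by ring, P_double]; exact P_odd3 (by omega)
lemma Pv15 : P (16*j+15) = -1 := P_odd3 (by omega)
lemma Pv16 : P (16*j+16) = P (j+1) := by
  rw [show 16*j+16 = 2*(8*j+8) by ring, P_double, show 8*j+8 = 2*(4*j+4) by ring,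
    P_double, show 4*j+4 = 2*(2*j+2) by ring, P_double, show 2*j+2 = 2*(j+1) by ring,
    P_double]
lemma Pv17 : P (16*j+17) = 1 := P_odd1 (by omega)

-- membership facts in D := {m | P m ≠ P (m+1)}
lemma F1 : P (16*j+1) = P (16*j+2) := by rw [Pv1, Pv2]
lemma F2 : P (16*j+2) ≠ P (16*j+3) := by rw [Pv2, Pv3]; decide
lemma F3 : P (16*j+3) ≠ P (16*j+4) := by rw [Pv3, Pv4]; decide
lemma F4 : P (16*j+4) = P (16*j+5) := by rw [Pv4, Pv5]
lemma F5 : P (16*j+5) ≠ P (16*j+6) := by rw [Pv5, Pv6]; decide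
lemma F6 : P (16*j+6) = P (16*j+7) := by rw [Pv6, Pv7]
lemma F78 : (P (16*j+7) ≠ P (16*j+8)) ↔ (P (16*j+8) = P (16*j+9)) := by
  rw [Pv7, Pv8, Pv9]
  rcases P_pm (2*j+1) with h | h <;> rw [h] <;> simp
lemma F9 : P (16*j+9) = P (16*j+10) := by rw [Pv9, Pv10]
lemma F10 : P (16*j+10) ≠ P (16*j+11) := by rw [Pv10, Pv11]; decide
lemma F11 : P (16*j+11) = P (16*j+12) := by rw [Pv11, Pv12]
lemma F12 : P (16*j+12) ≠ P (16*j+13) := by rw [Pv12, Pv13]; decide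
lemma F13 : P (16*j+13) ≠ P (16*j+14) := by rw [Pv13, Pv14]; decide
lemma F14 : P (16*j+14) = P (16*j+15) := by rw [Pv14, Pv15]
lemma F1516 : (P (16*j+15) ≠ P (16*j+16)) ↔ (P (16*j+16) = P (16*j+17)) := by
  rw [Pv15, Pv16, Pv17]
  rcases P_pm (j+1) with h | h <;> rw [h] <;> simp


section
variable (E : ℕ → ℕ)
variable (hE0 : E 0 = 0) (hmono : StrictMono E)
variable (hchar : ∀ m, 1 ≤ m → ((∃ n, 1 ≤ n ∧ E n = m) ↔ P m ≠ P (m + 1)))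

include hmono hchar in
lemma Estep (n b : ℕ) (hab : E n < b) (hb : P b ≠ P (b+1))
    (hmid : ∀ m, E n < m → m < b → P m = P (m+1)) : E (n+1) = b := by
  have h1 : 1 ≤ E (n+1) := by
    have := hmono (show n < n+1 by omega); omega
  have hmem : P (E (n+1)) ≠ P (E (n+1) + 1) :=
    (hchar _ h1).mp ⟨n+1, by omega, rfl⟩
  have hgt : E n < E (n+1) := hmono (by omega)
  rcases lt_trichotomy (E (n+1)) b with h | h | h
  · exact absurd (hmid _ hgt h) hmem
  · exact h
  · obtain ⟨m, hm1, hm2⟩ := (hchar b (by omega)).mpr hb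
    have : n < m := hmono.lt_iff_lt.mp (by omega)
    have : m < n + 1 := hmono.lt_iff_lt.mp (by omega)
    omega

include hE0 hmono hchar in
lemma Eblock : ∀ k, (E (8*k) = 16*k ∨ (1 ≤ k ∧ E (8*k) = 16*k - 1)) ∧
    E (8*k+1) = 16*k+2 ∧ E (8*k+2) = 16*k+3 ∧ E (8*k+3) = 16*k+5 ∧
    (E (8*k+4) = 16*k+7 ∨ E (8*k+4) = 16*k+8) ∧
    E (8*k+5) = 16*k+10 ∧ E (8*k+6) = 16*k+12 ∧ E (8*k+7) = 16*k+13 ∧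
    (E (8*k+8) = 16*k+15 ∨ E (8*k+8) = 16*k+16) := by
  have key : ∀ k, (E (8*k) = 16*k ∨ (1 ≤ k ∧ E (8*k) = 16*k - 1)) →
      E (8*k+1) = 16*k+2 ∧ E (8*k+2) = 16*k+3 ∧ E (8*k+3) = 16*k+5 ∧
      (E (8*k+4) = 16*k+7 ∨ E (8*k+4) = 16*k+8) ∧
      E (8*k+5) = 16*k+10 ∧ E (8*k+6) = 16*k+12 ∧ E (8*k+7) = 16*k+13 ∧
      (E (8*k+8) = 16*k+15 ∨ E (8*k+8) = 16*k+16) := by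
    intro k h0
    have e1 : E (8*k+1) = 16*k+2 := by
      rcases h0 with h0 | ⟨hk, h0⟩
      · refine Estep E hmono hchar _ _ (by omega) (F2 k) ?_
        intro m hm1 hm2
        have : m = 16*k+1 := by omega
        subst this; exact F1 k
      · -- E (8k) = 16k - 1 = 16(k-1)+15 ∈ D, so 16(k-1)+16 ∉ D by xor
        have hmem : P (E (8*k)) ≠ P (E (8*k) + 1) := by
          refine (hchar _ ?_).mp ⟨8*k, by omega, rfl⟩
          omega
        rw [h0] at hmem
        rw [show 16*k-1 = 16*(k-1)+15 by omega] at hmem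
        rw [show 16*(k-1)+15+1 = 16*(k-1)+16 by omega] at hmem
        have h16 : P (16*(k-1)+16) = P (16*(k-1)+17) := (F1516 (k-1)).mp hmem
        refine Estep E hmono hchar _ _ (by omega) (F2 k) ?_
        intro m hm1 hm2
        rcases (show m = 16*k ∨ m = 16*k+1 by omega) with rfl | rfl
        · rw [show 16*k = 16*(k-1)+16 by omega]
          rw [show 16*(k-1)+16+1 = 16*(k-1)+17 by omega]
          exact h16
        · exact F1 k
    have e2 : E (8*k+2) = 16*k+3 :=
      Estep E hmono hchar _ _ (by omega) (F3 k) (by intro m h1 h2; omega)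
    have e3 : E (8*k+3) = 16*k+5 := by
      refine Estep E hmono hchar _ _ (by omega) (F5 k) ?_
      intro m h1 h2
      have : m = 16*k+4 := by omega
      subst this; exact F4 k
    have e45 : (E (8*k+4) = 16*k+7 ∨ E (8*k+4) = 16*k+8) ∧ E (8*k+5) = 16*k+10 := by
      by_cases h7 : P (16*k+7) ≠ P (16*k+8)
      · have e4 : E (8*k+4) = 16*k+7 := by
          refine Estep E hmono hchar _ _ (by omega) h7 ?_
          intro m h1 h2
          have : m = 16*k+6 := by omega
          subst this; exact F6 k
        have e5 : E (8*k+5) = 16*k+10 := by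
          refine Estep E hmono hchar _ _ (by omega) (F10 k) ?_
          intro m h1 h2
          rcases (show m = 16*k+8 ∨ m = 16*k+9 by omega) with rfl | rfl
          · exact (F78 k).mp h7
          · exact F9 k
        exact ⟨Or.inl e4, e5⟩
      · push_neg at h7
        have h8 : P (16*k+8) ≠ P (16*k+9) := by
          intro h; exact absurd ((F78 k).mpr h) (by simpa using h7)
        have e4 : E (8*k+4) = 16*k+8 := by
          refine Estep E hmono hchar _ _ (by omega) h8 ?_
          intro m h1 h2
          rcases (show m = 16*k+6 ∨ m = 16*k+7 by omega) with rfl | rfl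
          · exact F6 k
          · exact h7
        have e5 : E (8*k+5) = 16*k+10 := by
          refine Estep E hmono hchar _ _ (by omega) (F10 k) ?_
          intro m h1 h2
          have : m = 16*k+9 := by omega
          subst this; exact F9 k
        exact ⟨Or.inr e4, e5⟩
    obtain ⟨e4, e5⟩ := e45
    have e6 : E (8*k+6) = 16*k+12 := by
      refine Estep E hmono hchar _ _ (by omega) (F12 k) ?_
      intro m h1 h2
      have : m = 16*k+11 := by omega
      subst this; exact F11 k
    have e7 : E (8*k+7) = 16*k+13 :=
      Estep E hmono hchar _ _ (by omega) (F13 k) (by intro m h1 h2; omega)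
    have e8 : E (8*k+8) = 16*k+15 ∨ E (8*k+8) = 16*k+16 := by
      by_cases h15 : P (16*k+15) ≠ P (16*k+16)
      · left
        refine Estep E hmono hchar _ _ (by omega) h15 ?_
        intro m h1 h2
        have : m = 16*k+14 := by omega
        subst this; exact F14 k
      · push_neg at h15
        right
        have h16 : P (16*k+16) ≠ P (16*k+17) := by
          intro h; exact absurd ((F1516 k).mpr h) (by simpa using h15)
        refine Estep E hmono hchar _ _ (by omega) h16 ?_
        intro m h1 h2
        rcases (show m = 16*k+14 ∨ m = 16*k+15 by omega) with rfl | rfl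
        · exact F14 k
        · exact h15
    exact ⟨e1, e2, e3, e4, e5, e6, e7, e8⟩
  intro k
  induction k with
  | zero =>
    have h0 : E 0 = 16*0 ∨ (1 ≤ 0 ∧ E 0 = 16*0-1) := Or.inl (by omega)
    exact ⟨h0, key 0 h0⟩
  | succ k ih =>
    obtain ⟨h0, _, _, _, _, _, _, _, h8⟩ := ih
    have h0' : E (8*(k+1)) = 16*(k+1) ∨ (1 ≤ k+1 ∧ E (8*(k+1)) = 16*(k+1)-1) := by
      rw [show 8*(k+1) = 8*k+8 by ring]
      rcases h8 with h | h
      · right; constructor; omega; omega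
      · left; omega
    exact ⟨h0', key (k+1) h0'⟩
end

end PaperfoldingAux

theorem regular_run_length_one_iff (p : ℕ → ℤ) (E : ℕ → ℕ)
    (hp : IsLimit (fun _ => 1) p) (hE : IsRunEnds p E) :
    ∀ n, 1 ≤ n → (E n - E (n - 1) = 1 ↔ (n % 8 = 2 ∨ n % 8 = 7)) := by
  obtain ⟨hE0, hmono, hchar⟩ := hE
  have p_eq : ∀ n, 1 ≤ n → p n = P n := by
    intro n hn
    have hrep : (List.range n).map (fun _ => (1:ℤ)) = List.replicate n 1 := by
      rw [List.map_const', List.length_range]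
    have hlen : (paper ((List.range n).map (fun _ => (1:ℤ)))).length = 2^n - 1 := by
      rw [paper, hrep, List.reverse_replicate, fold_len]
    have hk : n - 1 < 2^n - 1 := by
      have := Nat.lt_two_pow_self (n := n); omega
    have hh := hp n (n-1) (by rw [hlen]; exact hk)
    rw [show n - 1 + 1 = n by omega] at hh
    rw [hh, paper, hrep, List.reverse_replicate, fold_getD n (n-1) hk,
      show n-1+1 = n by omega]
  have hchar' : ∀ m, 1 ≤ m → ((∃ n, 1 ≤ n ∧ E n = m) ↔ P m ≠ P (m + 1)) := by
    intro m hm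
    rw [hchar m hm, p_eq m hm, p_eq (m+1) (by omega)]
  intro n hn
  have hk : n = 8*((n-1)/8) + ((n-1)%8) + 1 := by omega
  set k := (n-1)/8 with hkdef
  obtain ⟨h0, h1, h2, h3, h4, h5, h6, h7, h8⟩ := Eblock E hE0 hmono hchar' k
  rcases (show (n-1)%8 = 0 ∨ (n-1)%8 = 1 ∨ (n-1)%8 = 2 ∨ (n-1)%8 = 3 ∨ (n-1)%8 = 4 ∨
      (n-1)%8 = 5 ∨ (n-1)%8 = 6 ∨ (n-1)%8 = 7 by omega) with h|h|h|h|h|h|h|h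
  · have en : E n = 16*k+2 := by rw [show n = 8*k+1 by omega]; exact h1
    have en1 : E (n-1) = E (8*k) := by rw [show n-1 = 8*k by omega]
    omega
  · have en : E n = 16*k+3 := by rw [show n = 8*k+2 by omega]; exact h2
    have en1 : E (n-1) = 16*k+2 := by rw [show n-1 = 8*k+1 by omega]; exact h1
    omega
  · have en : E n = 16*k+5 := by rw [show n = 8*k+3 by omega]; exact h3
    have en1 : E (n-1) = 16*k+3 := by rw [show n-1 = 8*k+2 by omega]; exact h2
    omega
  · have en : E n = 16*k+7 ∨ E n = 16*k+8 := by
      rw [show n = 8*k+4 by omega]; exact h4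
    have en1 : E (n-1) = 16*k+5 := by rw [show n-1 = 8*k+3 by omega]; exact h3
    omega
  · have en : E n = 16*k+10 := by rw [show n = 8*k+5 by omega]; exact h5
    have en1 : E (n-1) = 16*k+7 ∨ E (n-1) = 16*k+8 := by
      rw [show n-1 = 8*k+4 by omega]; exact h4
    omega
  · have en : E n = 16*k+12 := by rw [show n = 8*k+6 by omega]; exact h6
    have en1 : E (n-1) = 16*k+10 := by rw [show n-1 = 8*k+5 by omega]; exact h5
    omega
  · have en : E n = 16*k+13 := by rw [show n = 8*k+7 by omega]; exact h7
    have en1 : E (n-1) = 16*k+12 := by rw [show n-1 = 8*k+6 by omega]; exact h6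
    omega
  · have en : E n = 16*k+15 ∨ E n = 16*k+16 := by
      rw [show n = 8*k+8 by omega]; exact h8
    have en1 : E (n-1) = 16*k+13 := by rw [show n-1 = 8*k+7 by omega]; exact h7
    omega
end
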